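/- (Discrete Luiro lemma, centered case) Let f_k → f in ℓ¹(ℤ^d). Then for every R > 0 there exists k₀ = k₀(R) such that for all k ≥ k₀ and every n ∈ ℤ^d with |n| ≤ R (Euclidean norm), one has Rf_k(n) ⊆ Rf(n); that is, every radius realizing the supremum defining Mf_k(n) also realizes the supremum defining Mf(n). -/

import Mathlib

open scoped BigOperators

noncomputable section

/-- The canonical embedding of a lattice point of `ℤ^d` into `ℝ^d`. -/
def latticeCoe (d : ℕ) (n : Fin d → ℤ) : EuclideanSpace ℝ (Fin d) :=
  WithLp.toLp 2 (fun i => (n i : ℝ))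

/-- The dilated "ball" `Ω̄_r(x) = {y : r⁻¹ (y - x) ∈ closure Ω}` for `r > 0`,
with `Ω̄_0(x) = {x}`. -/
def omegaBall (d : ℕ) (Ω : Set (EuclideanSpace ℝ (Fin d)))
    (x : EuclideanSpace ℝ (Fin d)) (r : ℝ) : Set (EuclideanSpace ℝ (Fin d)) :=
  if r = 0 then {x} else {y | r⁻¹ • (y - x) ∈ closure Ω}

/-- The set of lattice points of `ℤ^d` lying in `Ω̄_r(x)`. -/
def latticePts (d : ℕ) (Ω : Set (EuclideanSpace ℝ (Fin d)))
    (x : EuclideanSpace ℝ (Fin d)) (r : ℝ) : Set (Fin d → ℤ) :=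
  {m | latticeCoe d m ∈ omegaBall d Ω x r}

/-- The centered average `A_r|f|(n) = N(r)⁻¹ Σ_{m ∈ ℤ^d ∩ Ω̄_r} |f(n+m)|`. -/
def cAvg (d : ℕ) (Ω : Set (EuclideanSpace ℝ (Fin d)))
    (f : (Fin d → ℤ) → ℝ) (n : Fin d → ℤ) (r : ℝ) : ℝ :=
  ((latticePts d Ω 0 r).ncard : ℝ)⁻¹ *
    ∑' m : latticePts d Ω 0 r, |f (n + (m : Fin d → ℤ))|

/-- The centered discrete maximal function `Mf(n) = sup_{r ≥ 0} A_r|f|(n)`. -/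
def cMax (d : ℕ) (Ω : Set (EuclideanSpace ℝ (Fin d)))
    (f : (Fin d → ℤ) → ℝ) (n : Fin d → ℤ) : ℝ :=
  ⨆ r : {r : ℝ // 0 ≤ r}, cAvg d Ω f n r.1

/-- The discrete gradient `∇g(n) = (g(n+e_1)-g(n), …, g(n+e_d)-g(n))` as a vector
in Euclidean space `ℝ^d`. -/
def dgrad (d : ℕ) (g : (Fin d → ℤ) → ℝ) (n : Fin d → ℤ) : EuclideanSpace ℝ (Fin d) :=
  WithLp.toLp 2 (fun i => g (n + Pi.single i 1) - g n)


/-- The set of radii realizing the supremum in the centered maximal function at `n`. -/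
def cRadii (d : ℕ) (Ω : Set (EuclideanSpace ℝ (Fin d)))
    (g : (Fin d → ℤ) → ℝ) (n : Fin d → ℤ) : Set ℝ :=
  {r | 0 ≤ r ∧ cMax d Ω g n = cAvg d Ω g n r}

namespace LuiroAux

variable {d : ℕ} {Ω : Set (EuclideanSpace ℝ (Fin d))}

lemma coord_le_norm (x : EuclideanSpace ℝ (Fin d)) (i : Fin d) : |x i| ≤ ‖x‖ := by
  rw [EuclideanSpace.norm_eq]
  have h1 : (x i) ^ 2 ≤ ∑ j, ‖x j‖ ^ 2 := by
    have := Finset.single_le_sum (f := fun j => ‖x j‖ ^ 2)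
      (fun j _ => sq_nonneg _) (Finset.mem_univ i)
    simpa [Real.norm_eq_abs, sq_abs] using this
  calc |x i| = Real.sqrt ((x i) ^ 2) := (Real.sqrt_sq_eq_abs _).symm
    _ ≤ _ := Real.sqrt_le_sqrt h1

lemma finite_norm_le (C : ℝ) : {m : Fin d → ℤ | ‖latticeCoe d m‖ ≤ C}.Finite := by
  have hsub : {m : Fin d → ℤ | ‖latticeCoe d m‖ ≤ C} ⊆
      Set.pi Set.univ (fun _ : Fin d => Set.Icc (-⌈C⌉) ⌈C⌉) := by
    intro m hm i _
    have h1 : |(m i : ℝ)| ≤ C := le_trans (coord_le_norm (latticeCoe d m) i) hm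
    have h2 : ((|m i| : ℤ) : ℝ) ≤ (⌈C⌉ : ℝ) := by
      push_cast
      exact le_trans h1 (Int.le_ceil C)
    exact Set.mem_Icc.mpr (abs_le.mp (by exact_mod_cast h2))
  exact Set.Finite.subset (Set.Finite.pi fun _ => Set.finite_Icc _ _) hsub

lemma latticePts_finite (hΩbdd : Bornology.IsBounded Ω) (r : ℝ) :
    (latticePts d Ω 0 r).Finite := by
  obtain ⟨C, hC⟩ := hΩbdd.closure.exists_norm_le
  apply Set.Finite.subset (finite_norm_le (|r| * max C 0))
  intro m hm
  simp only [latticePts, omegaBall, Set.mem_setOf_eq] at hm ⊢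
  by_cases h0 : r = 0
  · rw [if_pos h0] at hm
    have : latticeCoe d m = 0 := by simpa using hm
    rw [this, norm_zero]
    positivity
  · rw [if_neg h0] at hm
    simp only [Set.mem_setOf_eq, sub_zero] at hm
    have hb : ‖r⁻¹ • latticeCoe d m‖ ≤ max C 0 :=
      le_trans (hC _ hm) (le_max_left _ _)
    rw [norm_smul, Real.norm_eq_abs, abs_inv] at hb
    have hr : (0:ℝ) < |r| := abs_pos.mpr h0
    calc ‖latticeCoe d m‖ = |r| * (|r|⁻¹ * ‖latticeCoe d m‖) := by
          field_simp
      _ ≤ |r| * max C 0 := by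
          exact mul_le_mul_of_nonneg_left hb hr.le

lemma zero_mem_latticePts (hΩzero : (0 : EuclideanSpace ℝ (Fin d)) ∈ Ω) (r : ℝ) :
    (0 : Fin d → ℤ) ∈ latticePts d Ω 0 r := by
  have hcoe : latticeCoe d 0 = 0 := by
    ext i; simp [latticeCoe]
  simp only [latticePts, omegaBall, Set.mem_setOf_eq, hcoe]
  by_cases h0 : r = 0
  · rw [if_pos h0]; rfl
  · rw [if_neg h0]
    simp only [Set.mem_setOf_eq, sub_zero, smul_zero]
    exact subset_closure hΩzero

lemma latticePts_mono (hΩconv : Convex ℝ Ω) (hΩzero : (0 : EuclideanSpace ℝ (Fin d)) ∈ Ω)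
    {r s : ℝ} (hr : 0 ≤ r) (hrs : r ≤ s) :
    latticePts d Ω 0 r ⊆ latticePts d Ω 0 s := by
  intro m hm
  simp only [latticePts, omegaBall, Set.mem_setOf_eq, sub_zero] at hm ⊢
  by_cases hs0 : s = 0
  · subst hs0
    have hr0 : r = 0 := le_antisymm hrs hr
    subst hr0
    exact hm
  · rw [if_neg hs0]
    have hs : 0 < s := lt_of_le_of_ne (le_trans hr hrs) (Ne.symm hs0)
    by_cases hr0 : r = 0
    · rw [if_pos hr0] at hm
      have : latticeCoe d m = 0 := hm
      simp only [Set.mem_setOf_eq, this, smul_zero]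
      exact subset_closure hΩzero
    · rw [if_neg hr0] at hm
      have hrpos : 0 < r := lt_of_le_of_ne hr (Ne.symm hr0)
      have hzero : (0 : EuclideanSpace ℝ (Fin d)) ∈ closure Ω := subset_closure hΩzero
      have hconv := hΩconv.closure
      have ht0 : 0 ≤ r / s := div_nonneg hr hs.le
      have ht1 : r / s ≤ 1 := div_le_one_of_le₀ hrs hs.le
      have hmem := hconv hm hzero (a := r / s) (b := 1 - r / s) ht0 (by linarith) (by ring)
      simp only [smul_zero, add_zero] at hmem
      have heq : (r / s) • (r⁻¹ • latticeCoe d m) = s⁻¹ • latticeCoe d m := by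
        rw [smul_smul]
        congr 1
        field_simp
      rwa [heq] at hmem

lemma cAvg_eq_sum (hΩbdd : Bornology.IsBounded Ω) (f : (Fin d → ℤ) → ℝ)
    (n : Fin d → ℤ) (r : ℝ) :
    cAvg d Ω f n r = (((latticePts_finite hΩbdd r).toFinset.card : ℝ))⁻¹ *
      ∑ m ∈ (latticePts_finite hΩbdd r).toFinset, |f (n + m)| := by
  have hfin := latticePts_finite (Ω := Ω) hΩbdd r
  unfold cAvg
  rw [Set.ncard_eq_toFinset_card _ hfin]
  congr 1
  have h2 : ∑' m : latticePts d Ω 0 r, |f (n + (m : Fin d → ℤ))|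
      = ∑' m : (hfin.toFinset : Set (Fin d → ℤ)), |f (n + (m : Fin d → ℤ))| := by
    rw [hfin.coe_toFinset]
  rw [h2, Finset.tsum_subtype' hfin.toFinset (fun m => |f (n + m)|)]

lemma one_le_card (hΩbdd : Bornology.IsBounded Ω)
    (hΩzero : (0 : EuclideanSpace ℝ (Fin d)) ∈ Ω) (r : ℝ) :
    1 ≤ (latticePts_finite (Ω := Ω) hΩbdd r).toFinset.card := by
  rw [Nat.one_le_iff_ne_zero, ← Nat.pos_iff_ne_zero, Finset.card_pos]
  exact ⟨0, (Set.Finite.mem_toFinset _).mpr (zero_mem_latticePts hΩzero r)⟩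

lemma sum_abs_le {f : (Fin d → ℤ) → ℝ} (hf : Summable fun m => |f m|)
    (n : Fin d → ℤ) (T : Finset (Fin d → ℤ)) :
    ∑ m ∈ T, |f (n + m)| ≤ ∑' m, |f m| := by
  have hs : Summable fun m => |f (n + m)| :=
    ((Equiv.addLeft n).summable_iff (f := fun m => |f m|)).mpr hf
  have h1 := Summable.sum_le_tsum T (fun m _ => abs_nonneg _) hs
  have h2 : ∑' m, |f (n + m)| = ∑' m, |f m| :=
    (Equiv.addLeft n).tsum_eq (fun m => |f m|)
  linarith

lemma cAvg_nonneg (f : (Fin d → ℤ) → ℝ) (n : Fin d → ℤ) (r : ℝ) :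
    0 ≤ cAvg d Ω f n r := by
  unfold cAvg
  exact mul_nonneg (inv_nonneg.mpr (Nat.cast_nonneg _))
    (tsum_nonneg fun _ => abs_nonneg _)

lemma cAvg_le_tsum (hΩbdd : Bornology.IsBounded Ω)
    (hΩzero : (0 : EuclideanSpace ℝ (Fin d)) ∈ Ω)
    {f : (Fin d → ℤ) → ℝ} (hf : Summable fun m => |f m|) (n : Fin d → ℤ)
    (r : ℝ) : cAvg d Ω f n r ≤ ∑' m, |f m| := by
  rw [cAvg_eq_sum hΩbdd]
  set T := (latticePts_finite (Ω := Ω) hΩbdd r).toFinset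
  have hc : (1:ℝ) ≤ (T.card : ℝ) := by exact_mod_cast one_le_card hΩbdd hΩzero r
  calc (((T.card : ℝ))⁻¹ * ∑ m ∈ T, |f (n + m)|) ≤ 1 * ∑' m, |f m| := by
        apply mul_le_mul (inv_le_one_of_one_le₀ hc) (sum_abs_le hf n T)
          (Finset.sum_nonneg fun m _ => abs_nonneg _) zero_le_one
    _ = ∑' m, |f m| := one_mul _

lemma cAvg_sub_le (hΩbdd : Bornology.IsBounded Ω)
    (hΩzero : (0 : EuclideanSpace ℝ (Fin d)) ∈ Ω)
    {f g : (Fin d → ℤ) → ℝ} (hfg : Summable fun m => |f m - g m|)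
    (n : Fin d → ℤ) (r : ℝ) :
    |cAvg d Ω f n r - cAvg d Ω g n r| ≤ ∑' m, |f m - g m| := by
  rw [cAvg_eq_sum hΩbdd, cAvg_eq_sum hΩbdd]
  set T := (latticePts_finite (Ω := Ω) hΩbdd r).toFinset with hT
  have hc : (1:ℝ) ≤ ((T.card : ℕ) : ℝ) := by
    exact_mod_cast one_le_card hΩbdd hΩzero r
  have hN0 : (0:ℝ) < ((T.card : ℕ) : ℝ) := lt_of_lt_of_le zero_lt_one hc
  set S1 := ∑ m ∈ T, |f (n + m)| with hS1
  set S2 := ∑ m ∈ T, |g (n + m)| with hS2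
  have key : |S1 - S2| ≤ ∑' m, |f m - g m| := by
    rw [hS1, hS2, ← Finset.sum_sub_distrib]
    calc |∑ m ∈ T, (|f (n + m)| - |g (n + m)|)|
        ≤ ∑ m ∈ T, abs (|f (n + m)| - |g (n + m)|) := Finset.abs_sum_le_sum_abs _ _
      _ ≤ ∑ m ∈ T, |f (n + m) - g (n + m)| :=
          Finset.sum_le_sum fun m _ => abs_abs_sub_abs_le_abs_sub _ _
      _ ≤ ∑' m, |f m - g m| := sum_abs_le hfg n T
  have heq : ((T.card:ℝ))⁻¹ * S1 - ((T.card:ℝ))⁻¹ * S2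
      = ((T.card:ℝ))⁻¹ * (S1 - S2) := by ring
  rw [heq, abs_mul, abs_of_nonneg (inv_nonneg.mpr hN0.le)]
  calc (((T.card:ℝ))⁻¹ * |S1 - S2|) ≤ 1 * (∑' m, |f m - g m|) :=
        mul_le_mul (inv_le_one_of_one_le₀ hc) key (abs_nonneg _) zero_le_one
    _ = _ := one_mul _

instance : Nonempty {r : ℝ // 0 ≤ r} := ⟨⟨0, le_refl 0⟩⟩

lemma bddAbove_range (hΩbdd : Bornology.IsBounded Ω)
    (hΩzero : (0 : EuclideanSpace ℝ (Fin d)) ∈ Ω)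
    {f : (Fin d → ℤ) → ℝ} (hf : Summable fun m => |f m|) (n : Fin d → ℤ) :
    BddAbove (Set.range fun r : {r : ℝ // 0 ≤ r} => cAvg d Ω f n r.1) := by
  refine ⟨∑' m, |f m|, ?_⟩
  rintro x ⟨r, rfl⟩
  exact cAvg_le_tsum hΩbdd hΩzero hf n r.1

lemma cAvg_le_cMax (hΩbdd : Bornology.IsBounded Ω)
    (hΩzero : (0 : EuclideanSpace ℝ (Fin d)) ∈ Ω)
    {f : (Fin d → ℤ) → ℝ} (hf : Summable fun m => |f m|) (n : Fin d → ℤ)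
    {r : ℝ} (hr : 0 ≤ r) : cAvg d Ω f n r ≤ cMax d Ω f n :=
  le_ciSup (bddAbove_range hΩbdd hΩzero hf n) ⟨r, hr⟩

lemma cMax_le {f : (Fin d → ℤ) → ℝ} {n : Fin d → ℤ} {B : ℝ}
    (h : ∀ r : ℝ, 0 ≤ r → cAvg d Ω f n r ≤ B) : cMax d Ω f n ≤ B :=
  ciSup_le fun r => h r.1 r.2

lemma exists_big_card (hΩopen : IsOpen Ω) (hΩbdd : Bornology.IsBounded Ω)
    (hΩzero : (0 : EuclideanSpace ℝ (Fin d)) ∈ Ω) (hd : 1 ≤ d) (K : ℕ) :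
    ∃ r : ℝ, 0 ≤ r ∧ (K : ℕ) ≤ (latticePts d Ω 0 r).ncard := by
  obtain ⟨ρ, hρ, hball⟩ := Metric.isOpen_iff.mp hΩopen 0 hΩzero
  set i0 : Fin d := ⟨0, hd⟩
  set r : ℝ := (K + 1) / ρ with hrdef
  have hr0 : 0 < r := by positivity
  set emb : Fin K → (Fin d → ℤ) := fun j => fun i => if i = i0 then (j : ℤ) else 0
    with hemb
  have hinj : Function.Injective emb := by
    intro a b hab
    have := congrFun hab i0
    simp only [hemb, if_pos rfl] at this
    exact Fin.ext (by exact_mod_cast this)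
  have hcoe : ∀ j : Fin K, latticeCoe d (emb j) = EuclideanSpace.single i0 ((j:ℕ) : ℝ) := by
    intro j
    ext i
    simp only [latticeCoe, hemb, EuclideanSpace.single_apply]
    by_cases h : i = i0 <;> simp [h]
  have hmem : ∀ j : Fin K, emb j ∈ latticePts d Ω 0 r := by
    intro j
    simp only [latticePts, omegaBall, Set.mem_setOf_eq, if_neg hr0.ne', sub_zero]
    apply subset_closure
    apply hball
    rw [Metric.mem_ball, dist_zero_right, norm_smul, hcoe j,
      EuclideanSpace.norm_single, Real.norm_eq_abs, Real.norm_eq_abs,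
      abs_inv, abs_of_pos hr0, abs_of_nonneg (by positivity : (0:ℝ) ≤ ((j:ℕ):ℝ))]
    have hK1 : (0:ℝ) < (K:ℝ) + 1 := by positivity
    rw [hrdef, inv_div, div_mul_eq_mul_div, div_lt_iff₀ hK1]
    have hj : ((j : ℕ) : ℝ) < (K : ℝ) + 1 := by
      have h := j.isLt
      have : ((j:ℕ):ℝ) < (K:ℝ) := by exact_mod_cast h
      linarith
    nlinarith
  refine ⟨r, hr0.le, ?_⟩
  have hsub : Set.range emb ⊆ latticePts d Ω 0 r := by
    rintro _ ⟨j, rfl⟩; exact hmem j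
  have himg : Set.range emb = ↑(Finset.image emb Finset.univ) := by
    simp [Finset.coe_image]
  have hK : (Set.range emb).ncard = K := by
    rw [himg, Set.ncard_coe_finset, Finset.card_image_of_injective _ hinj,
      Finset.card_univ, Fintype.card_fin]
  calc K = (Set.range emb).ncard := hK.symm
    _ ≤ (latticePts d Ω 0 r).ncard :=
        Set.ncard_le_ncard hsub (latticePts_finite hΩbdd r)

lemma gap (hΩopen : IsOpen Ω) (hΩbdd : Bornology.IsBounded Ω) (hΩconv : Convex ℝ Ω)
    (hΩzero : (0 : EuclideanSpace ℝ (Fin d)) ∈ Ω) (hd : 1 ≤ d)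
    {g : (Fin d → ℤ) → ℝ} (hg : Summable fun m => |g m|) (n : Fin d → ℤ)
    (hM : 0 < cMax d Ω g n) :
    ∃ δ > 0, ∀ r : ℝ, 0 ≤ r → cAvg d Ω g n r ≠ cMax d Ω g n →
      cAvg d Ω g n r ≤ cMax d Ω g n - δ := by
  set M := cMax d Ω g n with hMdef
  set G := ∑' m, |g m| with hGdef
  have hG0 : 0 ≤ G := tsum_nonneg fun _ => abs_nonneg _
  have hM2 : 0 < M / 2 := by linarith
  set K : ℕ := ⌈G / (M / 2)⌉₊ + 1 with hKdef
  have hKpos : (0:ℝ) < (K:ℝ) := by positivity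
  have hKlt : G / (M / 2) < (K : ℝ) := by
    refine lt_of_le_of_lt (Nat.le_ceil _) ?_
    exact_mod_cast Nat.lt_succ_self _
  obtain ⟨r₀, hr₀0, hr₀K⟩ := exists_big_card hΩopen hΩbdd hΩzero hd K
  have hsubs : ∀ r : ℝ, 0 ≤ r → M / 2 < cAvg d Ω g n r →
      latticePts d Ω 0 r ⊆ latticePts d Ω 0 r₀ := by
    intro r hr hv
    rcases le_total r r₀ with h | h
    · exact latticePts_mono hΩconv hΩzero hr h
    · exfalso
      have hsub := latticePts_mono hΩconv hΩzero hr₀0 h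
      have hcard : K ≤ (latticePts d Ω 0 r).ncard :=
        le_trans hr₀K (Set.ncard_le_ncard hsub (latticePts_finite hΩbdd r))
      have hNK : (K : ℝ) ≤
          (((latticePts_finite (Ω := Ω) hΩbdd r).toFinset.card : ℕ) : ℝ) := by
        rw [Set.ncard_eq_toFinset_card _ (latticePts_finite hΩbdd r)] at hcard
        exact_mod_cast hcard
      have hNpos : (0:ℝ) <
          (((latticePts_finite (Ω := Ω) hΩbdd r).toFinset.card : ℕ) : ℝ) :=
        lt_of_lt_of_le hKpos hNK
      have havg : cAvg d Ω g n r ≤ G / (K : ℝ) := by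
        rw [cAvg_eq_sum hΩbdd]
        calc ((((latticePts_finite (Ω := Ω) hΩbdd r).toFinset.card : ℕ) : ℝ))⁻¹ *
              ∑ m ∈ (latticePts_finite (Ω := Ω) hΩbdd r).toFinset, |g (n + m)|
            ≤ ((((latticePts_finite (Ω := Ω) hΩbdd r).toFinset.card : ℕ) : ℝ))⁻¹ * G :=
              mul_le_mul_of_nonneg_left (sum_abs_le hg n _) (inv_nonneg.mpr hNpos.le)
          _ ≤ (K:ℝ)⁻¹ * G := by
              apply mul_le_mul_of_nonneg_right _ hG0
              exact inv_anti₀ hKpos hNK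
          _ = G / (K:ℝ) := by rw [div_eq_inv_mul]
      have hGK : G / (K:ℝ) < M / 2 := by
        rw [div_lt_iff₀ hKpos]
        have := (div_lt_iff₀ hM2).mp hKlt
        linarith
      linarith
  set F : Finset ℝ := ((latticePts_finite (Ω := Ω) hΩbdd r₀).toFinset.powerset).image
      (fun T => ((T.card : ℝ))⁻¹ * ∑ m ∈ T, |g (n + m)|) with hF
  set H : Finset ℝ := F.filter (fun v => v < M) with hH
  set δ : ℝ := if h : H.Nonempty then min (M/2) (M - H.max' h) else M/2 with hδ
  have hδpos : 0 < δ := by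
    rw [hδ]; split_ifs with h
    · apply lt_min hM2
      have hmm : H.max' h < M := (Finset.mem_filter.mp (H.max'_mem h)).2
      linarith
    · exact hM2
  have hδle : δ ≤ M/2 := by
    rw [hδ]; split_ifs with h
    exacts [min_le_left _ _, le_refl _]
  refine ⟨δ, hδpos, ?_⟩
  intro r hr hne
  have hle : cAvg d Ω g n r ≤ M := cAvg_le_cMax hΩbdd hΩzero hg n hr
  have hlt : cAvg d Ω g n r < M := lt_of_le_of_ne hle hne
  by_cases hv : cAvg d Ω g n r ≤ M / 2
  · linarith
  · push_neg at hv
    have hsub := hsubs r hr hv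
    have hmemF : cAvg d Ω g n r ∈ F := by
      rw [hF, Finset.mem_image]
      refine ⟨(latticePts_finite (Ω := Ω) hΩbdd r).toFinset, ?_,
        (cAvg_eq_sum hΩbdd g n r).symm⟩
      rw [Finset.mem_powerset]
      exact Set.Finite.toFinset_subset_toFinset.mpr hsub
    have hmemH : cAvg d Ω g n r ∈ H := by
      rw [hH, Finset.mem_filter]; exact ⟨hmemF, hlt⟩
    have hne' : H.Nonempty := ⟨_, hmemH⟩
    have hmax := H.le_max' _ hmemH
    have hδ2 : δ ≤ M - H.max' hne' := by
      rw [hδ, dif_pos hne']; exact min_le_right _ _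
    linarith

lemma per_point (hΩopen : IsOpen Ω) (hΩbdd : Bornology.IsBounded Ω)
    (hΩconv : Convex ℝ Ω) (hΩzero : (0 : EuclideanSpace ℝ (Fin d)) ∈ Ω) (hd : 1 ≤ d)
    {f : ℕ → (Fin d → ℤ) → ℝ} {g : (Fin d → ℤ) → ℝ}
    (hf : ∀ k, Summable fun m => |f k m|) (hg : Summable fun m => |g m|)
    (hconv : Filter.Tendsto (fun k => ∑' m, |f k m - g m|) Filter.atTop (nhds 0))
    (n : Fin d → ℤ) :
    ∃ k₀ : ℕ, ∀ k ≥ k₀, cRadii d Ω (f k) n ⊆ cRadii d Ω g n := by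
  have hfg : ∀ k, Summable fun m => |f k m - g m| := by
    intro k
    apply Summable.of_nonneg_of_le (fun m => abs_nonneg _) (fun m => ?_) ((hf k).add hg)
    calc |f k m - g m| ≤ |f k m| + |g m| := abs_sub _ _
      _ = _ := rfl
  have hM0 : 0 ≤ cMax d Ω g n :=
    le_trans (cAvg_nonneg g n 0) (cAvg_le_cMax hΩbdd hΩzero hg n le_rfl)
  rcases eq_or_lt_of_le hM0 with hM | hM
  · refine ⟨0, fun k _ r hrmem => ⟨hrmem.1, ?_⟩⟩
    have h1 : cAvg d Ω g n r ≤ cMax d Ω g n := cAvg_le_cMax hΩbdd hΩzero hg n hrmem.1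
    have h2 : 0 ≤ cAvg d Ω g n r := cAvg_nonneg g n r
    linarith
  · obtain ⟨δ, hδ, hgap⟩ := gap hΩopen hΩbdd hΩconv hΩzero hd hg n hM
    have hev : ∀ᶠ k in Filter.atTop, ∑' m, |f k m - g m| < δ / 3 :=
      hconv.eventually_lt_const (by linarith)
    obtain ⟨k₀, hk₀⟩ := Filter.eventually_atTop.mp hev
    refine ⟨k₀, fun k hk r hrmem => ?_⟩
    obtain ⟨hr0, hre⟩ := hrmem
    have hε := hk₀ k hk
    have hε0 : 0 ≤ ∑' m, |f k m - g m| := tsum_nonneg fun _ => abs_nonneg _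
    have h1 := abs_le.mp (cAvg_sub_le hΩbdd hΩzero (hfg k) n r)
    have h2 : cMax d Ω g n ≤ cMax d Ω (f k) n + ∑' m, |f k m - g m| := by
      apply cMax_le
      intro s hs
      have hd1 := abs_le.mp (cAvg_sub_le hΩbdd hΩzero (hfg k) n s)
      have hd2 := cAvg_le_cMax hΩbdd hΩzero (hf k) n hs
      linarith [hd1.1]
    have heq : cAvg d Ω g n r = cMax d Ω g n := by
      by_contra hne
      have := hgap r hr0 hne
      linarith [h1.2, h2, hre ▸ le_refl (cMax d Ω (f k) n)]
    exact ⟨hr0, heq.symm⟩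

end LuiroAux

/-- **Discrete Luiro lemma (centered case)**: if `f_k → f` in `ℓ¹(ℤ^d)` then for each
`R > 0` there is `k₀` such that for `k ≥ k₀` and all lattice points `n` with `|n| ≤ R`
we have `Rf_k(n) ⊆ Rf(n)`. -/
theorem centered_radii_subset (d : ℕ) (hd : 1 ≤ d)
    (Ω : Set (EuclideanSpace ℝ (Fin d))) (hΩopen : IsOpen Ω)
    (hΩbdd : Bornology.IsBounded Ω) (hΩconv : Convex ℝ Ω)
    (hΩzero : (0 : EuclideanSpace ℝ (Fin d)) ∈ Ω)
    (f : ℕ → (Fin d → ℤ) → ℝ) (g : (Fin d → ℤ) → ℝ)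
    (hf : ∀ k, Summable (fun n => |f k n|)) (hg : Summable (fun n => |g n|))
    (hconv : Filter.Tendsto (fun k => ∑' n, |f k n - g n|) Filter.atTop (nhds 0)) :
    ∀ R : ℝ, 0 < R → ∃ k₀ : ℕ, ∀ k ≥ k₀, ∀ n : Fin d → ℤ,
      ‖latticeCoe d n‖ ≤ R → cRadii d Ω (f k) n ⊆ cRadii d Ω g n := by
  intro R hR
  have hfin := LuiroAux.finite_norm_le (d := d) R
  have hpp := fun n : Fin d → ℤ =>
    LuiroAux.per_point hΩopen hΩbdd hΩconv hΩzero hd hf hg hconv n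
  choose k0 hk0 using hpp
  refine ⟨hfin.toFinset.sup k0, fun k hk n hn => ?_⟩
  have hmem : n ∈ hfin.toFinset := (Set.Finite.mem_toFinset _).mpr hn
  exact hk0 n k (le_trans (Finset.le_sup hmem) hk)


end
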